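/- Let H : I → B(H) be strongly continuous and pointwise self-adjoint (H(t)* = H(t) for all t). Then the unique strong solution V of V'(t) = −iH(t)V(t), V(t₀) = 1, is unitary for every t ∈ I. -/

import Mathlib

open ContinuousLinearMap

/-- An isometry within norm distance `< 1` of a unitary is unitary. -/
lemma aux_near_unitary_unitary
    {H : Type*} [NormedAddCommGroup H] [InnerProductSpace ℂ H] [CompleteSpace H]
    (U W : H →L[ℂ] H) (hU : adjoint U * U = 1)
    (hW1 : adjoint W * W = 1) (hW2 : W * adjoint W = 1)
    (hnorm : ‖U - W‖ < 1) : U * adjoint U = 1 := by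
  have hWnorm : ‖adjoint W‖ ≤ 1 := by
    have h1 : ‖adjoint W‖ = ‖W‖ := LinearIsometryEquiv.norm_map adjoint W
    have h2 : ‖W‖ * ‖W‖ = ‖adjoint W ∘L W‖ := (norm_adjoint_comp_self W).symm
    have h3 : ‖(1 : H →L[ℂ] H)‖ ≤ 1 := norm_id_le
    rw [show adjoint W ∘L W = adjoint W * W from rfl, hW1] at h2
    nlinarith [norm_nonneg W]
  have key : ‖(1 : H →L[ℂ] H) - adjoint W * U‖ < 1 := by
    have : (1 : H →L[ℂ] H) - adjoint W * U = adjoint W * (W - U) := by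
      rw [mul_sub, hW1]
    rw [this]
    calc ‖adjoint W * (W - U)‖ ≤ ‖adjoint W‖ * ‖W - U‖ := norm_mul_le _ _
    _ ≤ 1 * ‖W - U‖ := by
        apply mul_le_mul_of_nonneg_right hWnorm (norm_nonneg _)
    _ = ‖U - W‖ := by rw [one_mul, norm_sub_rev]
    _ < 1 := hnorm
  have hAunit : IsUnit (adjoint W * U) := by
    have := (Units.oneSub ((1 : H →L[ℂ] H) - adjoint W * U) key).isUnit
    simpa using this
  have hWunit : IsUnit W := ⟨⟨W, adjoint W, hW2, hW1⟩, rfl⟩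
  have hUunit : IsUnit U := by
    have : W * (adjoint W * U) = U := by rw [← mul_assoc, hW2, one_mul]
    rw [← this]; exact hWunit.mul hAunit
  obtain ⟨u, hu⟩ := hUunit
  have hadj : adjoint U = ↑u⁻¹ := by
    have h1 : U * ↑u⁻¹ = 1 := by rw [← hu]; exact u.mul_inv
    calc adjoint U = adjoint U * (U * ↑u⁻¹) := by rw [h1, mul_one]
    _ = (adjoint U * U) * ↑u⁻¹ := by rw [mul_assoc]
    _ = ↑u⁻¹ := by rw [hU, one_mul]
  rw [hadj, ← hu]; exact u.mul_inv

/-- Let `Hfam : I → B(H)` be strongly continuous and pointwise self-adjoint.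
Then the (unique) strong solution `V` of `V'(t) = -i Hfam(t) V(t)`, `V(t₀) = 1`, is unitary
for every `t ∈ I`. -/
theorem strong_solution_of_selfAdjoint_generator_unitary
    {H : Type*} [NormedAddCommGroup H] [InnerProductSpace ℂ H] [CompleteSpace H]
    (I : Set ℝ) (hI : I.OrdConnected) (t₀ : ℝ) (ht₀ : t₀ ∈ I)
    (Hfam : ℝ → H →L[ℂ] H)
    (hcont : ∀ ψ : H, ContinuousOn (fun t => Hfam t ψ) I)
    (hsa : ∀ t ∈ I, IsSelfAdjoint (Hfam t))
    (V : ℝ → H →L[ℂ] H)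
    (hV0 : V t₀ = 1)
    (hVode : ∀ ψ : H, ∀ t ∈ I,
      HasDerivWithinAt (fun s => V s ψ) (-(Complex.I • (Hfam t (V t ψ)))) I t) :
    ∀ t ∈ I, ContinuousLinearMap.adjoint (V t) * V t = 1 ∧
      V t * ContinuousLinearMap.adjoint (V t) = 1 := by
  have hconv : Convex ℝ I := convex_iff_ordConnected.mpr hI
  -- Step A : inner products are conserved
  have hinner : ∀ t ∈ I, ∀ ψ φ : H,
      (inner ℂ (V t ψ) (V t φ) : ℂ) = inner ℂ ψ φ := by
    intro t ht ψ φ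
    have hderiv : ∀ x ∈ I, HasDerivWithinAt
        (fun s => (inner ℂ (V s ψ) (V s φ) : ℂ)) 0 I x := by
      intro x hx
      have h := HasDerivWithinAt.inner ℂ (hVode ψ x hx) (hVode φ x hx)
      have hA : ContinuousLinearMap.adjoint (Hfam x) = Hfam x :=
        ContinuousLinearMap.isSelfAdjoint_iff'.mp (hsa x hx)
      have hzero : (inner ℂ (V x ψ) (-(Complex.I • Hfam x (V x φ))) : ℂ)
          + inner ℂ (-(Complex.I • Hfam x (V x ψ))) (V x φ) = 0 := by
        rw [inner_neg_right, inner_neg_left, inner_smul_right, inner_smul_left]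
        have hself : (inner ℂ (Hfam x (V x ψ)) (V x φ) : ℂ)
            = inner ℂ (V x ψ) (Hfam x (V x φ)) := by
          conv_lhs => rw [← hA]
          rw [ContinuousLinearMap.adjoint_inner_left]
        rw [hself, Complex.conj_I]
        ring
      rwa [hzero] at h
    have := hconv.norm_image_sub_le_of_norm_hasDerivWithin_le (C := 0)
      (f' := fun _ => (0 : ℂ)) hderiv (fun x _ => by simp) ht₀ ht
    have heq : (inner ℂ (V t ψ) (V t φ) : ℂ) = inner ℂ (V t₀ ψ) (V t₀ φ) := by
      rw [← sub_eq_zero, ← norm_eq_zero]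
      have h0 : (0 : ℝ) * ‖t - t₀‖ = 0 := by ring
      exact le_antisymm (h0 ▸ this) (norm_nonneg _)
    rw [heq, hV0]; simp
  -- Step B : V t is an isometry
  have hiso : ∀ t ∈ I, ContinuousLinearMap.adjoint (V t) * V t = 1 := by
    intro t ht
    ext ψ
    apply ext_inner_left ℂ
    intro v
    simp only [ContinuousLinearMap.mul_apply, ContinuousLinearMap.one_apply,
      ContinuousLinearMap.adjoint_inner_right]
    exact hinner t ht v ψ
  -- Step C : norm preservation
  have hnorm : ∀ t ∈ I, ∀ ψ : H, ‖V t ψ‖ = ‖ψ‖ := by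
    intro t ht ψ
    have := hinner t ht ψ ψ
    rw [inner_self_eq_norm_sq_to_K, inner_self_eq_norm_sq_to_K] at this
    have h2 : (‖V t ψ‖ : ℝ) ^ 2 = ‖ψ‖ ^ 2 := by exact_mod_cast this
    nlinarith [norm_nonneg (V t ψ), norm_nonneg ψ]
  -- Step D : local operator-norm Lipschitz bound
  have hlip : ∀ s ∈ I, ∃ δ > 0, ∀ t ∈ I, |t - s| ≤ δ → ‖V t - V s‖ < 1 := by
    intro s hs
    -- find a compact interval [a,b] ⊆ I capturing a neighborhood of s in I
    obtain ⟨a, b, ha, hb, has, hsb, δ₀, hδ₀, hcap⟩ :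
        ∃ a b : ℝ, a ∈ I ∧ b ∈ I ∧ a ≤ s ∧ s ≤ b ∧
          ∃ δ₀ > (0:ℝ), ∀ t ∈ I, |t - s| ≤ δ₀ → t ∈ Set.Icc a b := by
      by_cases hR : ∃ u ∈ I, s < u
      · obtain ⟨u, hu, hsu⟩ := hR
        by_cases hL : ∃ w ∈ I, w < s
        · obtain ⟨w, hw, hws⟩ := hL
          refine ⟨w, u, hw, hu, hws.le, hsu.le, min (s - w) (u - s), lt_min (by linarith) (by linarith), ?_⟩
          intro t _ hts
          rw [abs_le] at hts
          constructor
          · have := hts.1; have := min_le_left (s - w) (u - s); linarith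
          · have := hts.2; have := min_le_right (s - w) (u - s); linarith
        · push_neg at hL
          refine ⟨s, u, hs, hu, le_refl s, hsu.le, u - s, by linarith, ?_⟩
          intro t htI hts
          rw [abs_le] at hts
          exact ⟨hL t htI, by linarith [hts.2]⟩
      · push_neg at hR
        by_cases hL : ∃ w ∈ I, w < s
        · obtain ⟨w, hw, hws⟩ := hL
          refine ⟨w, s, hw, hs, hws.le, le_refl s, s - w, by linarith, ?_⟩
          intro t htI hts
          rw [abs_le] at hts
          exact ⟨by linarith [hts.1], hR t htI⟩
        · push_neg at hL
          refine ⟨s, s, hs, hs, le_refl s, le_refl s, 1, one_pos, ?_⟩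
          intro t htI _
          exact ⟨hL t htI, hR t htI⟩
    have hIcc : Set.Icc a b ⊆ I := hI.out ha hb
    -- bound on ‖Hfam r‖ on [a,b] via Banach–Steinhaus
    obtain ⟨M, hM⟩ : ∃ M : ℝ, ∀ r ∈ Set.Icc a b, ‖Hfam r‖ ≤ M := by
      have hbdd : ∀ ψ : H, ∃ C, ∀ r : Set.Icc a b, ‖Hfam r ψ‖ ≤ C := by
        intro ψ
        obtain ⟨C, hC⟩ := (isCompact_Icc (a := a) (b := b)).exists_bound_of_continuousOn
          ((hcont ψ).mono hIcc)
        exact ⟨C, fun r => hC r r.2⟩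
      obtain ⟨C', hC'⟩ := banach_steinhaus (g := fun r : Set.Icc a b => Hfam r) hbdd
      exact ⟨C', fun r hr => hC' ⟨r, hr⟩⟩
    have hM0 : 0 ≤ M := le_trans (norm_nonneg _) (hM s ⟨has, hsb⟩)
    refine ⟨min δ₀ (1 / (2 * (M + 1))), by positivity, ?_⟩
    intro t htI hts
    have htab : t ∈ Set.Icc a b :=
      hcap t htI (le_trans hts (min_le_left _ _))
    have hsub : Set.uIcc s t ⊆ Set.Icc a b :=
      Set.uIcc_subset_Icc ⟨has, hsb⟩ htab
    have hkey : ∀ ψ : H, ‖V t ψ - V s ψ‖ ≤ M * ‖ψ‖ * ‖t - s‖ := by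
      intro ψ
      have hconv' : Convex ℝ (Set.uIcc s t) := convex_uIcc s t
      refine hconv'.norm_image_sub_le_of_norm_hasDerivWithin_le
        (f := fun r => V r ψ) (f' := fun r => -(Complex.I • Hfam r (V r ψ)))
        (fun r hr => (hVode ψ r (hIcc (hsub hr))).mono (hsub.trans hIcc))
        (fun r hr => ?_) Set.left_mem_uIcc Set.right_mem_uIcc
      have hrI : r ∈ I := hIcc (hsub hr)
      rw [norm_neg, norm_smul, Complex.norm_I, one_mul]
      calc ‖Hfam r (V r ψ)‖ ≤ ‖Hfam r‖ * ‖V r ψ‖ := (Hfam r).le_opNorm _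
      _ = ‖Hfam r‖ * ‖ψ‖ := by rw [hnorm r hrI]
      _ ≤ M * ‖ψ‖ := mul_le_mul_of_nonneg_right (hM r (hsub hr)) (norm_nonneg _)
    have hop : ‖V t - V s‖ ≤ M * ‖t - s‖ := by
      apply ContinuousLinearMap.opNorm_le_bound _ (by positivity)
      intro ψ
      have := hkey ψ
      simp only [ContinuousLinearMap.sub_apply]
      calc ‖V t ψ - V s ψ‖ ≤ M * ‖ψ‖ * ‖t - s‖ := this
      _ = M * ‖t - s‖ * ‖ψ‖ := by ring
    have hts' : |t - s| ≤ 1 / (2 * (M + 1)) := le_trans hts (min_le_right _ _)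
    calc ‖V t - V s‖ ≤ M * ‖t - s‖ := hop
    _ ≤ M * (1 / (2 * (M + 1))) := by
        apply mul_le_mul_of_nonneg_left _ hM0
        rwa [Real.norm_eq_abs]
    _ < 1 := by rw [mul_one_div, div_lt_one (by linarith)]; linarith
  -- Step E : connectedness argument
  haveI : PreconnectedSpace I := Subtype.preconnectedSpace hconv.isPreconnected
  set S : Set I := {x : I | V ↑x * ContinuousLinearMap.adjoint (V ↑x) = 1} with hS
  have hopen : IsOpen S := by
    rw [Metric.isOpen_iff]
    rintro ⟨x, hx⟩ hxS
    obtain ⟨δ, hδ, hδ'⟩ := hlip x hx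
    refine ⟨δ, hδ, ?_⟩
    rintro ⟨y, hy⟩ hyx
    have hdist : |y - x| ≤ δ := by
      rw [Metric.mem_ball, Subtype.dist_eq, Real.dist_eq] at hyx
      exact hyx.le
    exact aux_near_unitary_unitary (V y) (V x) (hiso y hy) (hiso x hx) hxS
      (hδ' y hy hdist)
  have hclosed : IsClosed S := by
    rw [← isOpen_compl_iff, Metric.isOpen_iff]
    rintro ⟨x, hx⟩ hxS
    obtain ⟨δ, hδ, hδ'⟩ := hlip x hx
    refine ⟨δ, hδ, ?_⟩
    rintro ⟨y, hy⟩ hyx hyS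
    apply hxS
    have hdist : |y - x| ≤ δ := by
      rw [Metric.mem_ball, Subtype.dist_eq, Real.dist_eq] at hyx
      exact hyx.le
    have h1 : ‖V x - V y‖ < 1 := by
      rw [norm_sub_rev]; exact hδ' y hy hdist
    exact aux_near_unitary_unitary (V x) (V y) (hiso x hx) (hiso y hy) hyS h1
  have hne : S.Nonempty := by
    refine ⟨⟨t₀, ht₀⟩, ?_⟩
    show V t₀ * ContinuousLinearMap.adjoint (V t₀) = 1
    rw [hV0, ContinuousLinearMap.one_def, ContinuousLinearMap.adjoint_id]
    rfl
  have hSuniv : S = Set.univ := IsClopen.eq_univ ⟨hclosed, hopen⟩ hne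
  intro t ht
  refine ⟨hiso t ht, ?_⟩
  have : (⟨t, ht⟩ : I) ∈ S := hSuniv ▸ Set.mem_univ _
  exact this
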